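/- Let m, n be positive integers and h a norm on ℝ^m with generated norm H on ℝ^{m×n}. Let F be a compactly supported finite ℝ^{m×n}-valued Borel measure on ℝ^n and F_0 a compactly supported finite ℝ^m-valued Borel measure on ℝ^n with ∂F = F_0. Then for every admissible dual potential φ : ℝ^n → ℝ^m one has ∫ φ · dF_0 ≤ |F|_H. -/

import Mathlib

open MeasureTheory

noncomputable section

/-- `ℝ^n` with the Euclidean norm. -/
abbrev Euc (n : ℕ) := EuclideanSpace ℝ (Fin n)

/-- `h` is a norm on `ℝ^m`. -/
def IsNorm {m : ℕ} (h : (Fin m → ℝ) → ℝ) : Prop :=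
  (∀ x y, h (x + y) ≤ h x + h y) ∧ (∀ (c : ℝ) (x), h (c • x) = |c| * h x) ∧
    ∀ x, h x = 0 → x = 0

/-- The dual norm `h_*` of `h`: `h_*(g) = sup { g·θ : h θ ≤ 1 }`. -/
def dualNorm {m : ℕ} (h : (Fin m → ℝ) → ℝ) (g : Fin m → ℝ) : ℝ :=
  sSup {r | ∃ θ : Fin m → ℝ, h θ ≤ 1 ∧ r = ∑ i, g i * θ i}

/-- Matrix-vector product `M u`. -/
def matVec {m n : ℕ} (M : Fin m → Fin n → ℝ) (u : Euc n) : Fin m → ℝ :=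
  fun i => ∑ j, M i j * u j

/-- Frobenius inner product `M : N`. -/
def frob {m n : ℕ} (M N : Fin m → Fin n → ℝ) : ℝ := ∑ i, ∑ j, M i j * N i j

/-- `M ∈ ∂H(0)`, i.e. `h_*(M u) ≤ 1` for all `|u| ≤ 1`. -/
def inSubdiffH {m n : ℕ} (h : (Fin m → ℝ) → ℝ) (M : Fin m → Fin n → ℝ) : Prop :=
  ∀ u : Euc n, ‖u‖ ≤ 1 → dualNorm h (matVec M u) ≤ 1

/-- The norm `H` on `ℝ^{m×n}` generated by `h`:
`H(N) = sup { M:N : M ∈ ∂H(0) }`. -/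
def genNorm {m n : ℕ} (h : (Fin m → ℝ) → ℝ) (N : Fin m → Fin n → ℝ) : ℝ :=
  sSup {r | ∃ M : Fin m → Fin n → ℝ, inSubdiffH h M ∧ r = frob M N}

/-- The rank-one matrix `θ ⊗ e`. -/
def outer {m n : ℕ} (θ : Fin m → ℝ) (e : Euc n) : Fin m → Fin n → ℝ :=
  fun i j => θ i * e j

/-- An `ℝ^{m×n}`-valued Borel measure on `ℝ^n`, given by its component signed measures. -/
abbrev MatMeas (m n : ℕ) := Fin m → Fin n → MeasureTheory.SignedMeasure (Euc n)

/-- An `ℝ^m`-valued Borel measure on `ℝ^n`, given by its component signed measures. -/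
abbrev VecMeas (m n : ℕ) := Fin m → MeasureTheory.SignedMeasure (Euc n)

/-- Integral of a function against a signed measure (via the Jordan decomposition). -/
def sInt {n : ℕ} (ν : MeasureTheory.SignedMeasure (Euc n)) (f : Euc n → ℝ) : ℝ :=
  ∫ x, f x ∂ν.toJordanDecomposition.posPart - ∫ x, f x ∂ν.toJordanDecomposition.negPart

/-- The total variation `|F|_H` of `F` with respect to the norm `H` generated by `h`:
the supremum of `Σ_k H(F(B_k))` over countable Borel partitions `(B_k)` of `ℝ^n`. -/
def tvH {m n : ℕ} (h : (Fin m → ℝ) → ℝ) (F : MatMeas m n) : ℝ :=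
  sSup {r | ∃ B : ℕ → Set (Euc n), (∀ k, MeasurableSet (B k)) ∧
    Pairwise (Function.onFun Disjoint B) ∧ (⋃ k, B k) = Set.univ ∧
    r = ∑' k, genNorm h (fun i j => F i j (B k))}

/-- `F` is supported in `K`: it vanishes on Borel sets disjoint from `K`. -/
def suppIn {m n : ℕ} (F : MatMeas m n) (K : Set (Euc n)) : Prop :=
  ∀ B : Set (Euc n), MeasurableSet B → Disjoint B K → ∀ i j, F i j B = 0

/-- `F` is compactly supported. -/
def suppInCpt {m n : ℕ} (F : MatMeas m n) : Prop :=
  ∃ K : Set (Euc n), IsCompact K ∧ suppIn F K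

/-- `F₀` is compactly supported. -/
def vSuppInCpt {m n : ℕ} (F0 : VecMeas m n) : Prop :=
  ∃ K : Set (Euc n), IsCompact K ∧
    ∀ B : Set (Euc n), MeasurableSet B → Disjoint B K → ∀ i, F0 i B = 0

/-- The Jacobian matrix `Dψ(x) ∈ ℝ^{m×n}` of `ψ : ℝ^n → ℝ^m`. -/
def jac {m n : ℕ} (ψ : Euc n → (Fin m → ℝ)) (x : Euc n) : Fin m → Fin n → ℝ :=
  fun i j => fderiv ℝ ψ x (EuclideanSpace.single j 1) i

/-- `∂F = F₀`, i.e. `∫ Dψ : dF = ∫ ψ · dF₀` for all smooth compactly supported `ψ`. -/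
def isBoundary {m n : ℕ} (F : MatMeas m n) (F0 : VecMeas m n) : Prop :=
  ∀ ψ : Euc n → (Fin m → ℝ), ContDiff ℝ (⊤ : ℕ∞) ψ → HasCompactSupport ψ →
    (∑ i, ∑ j, sInt (F i j) fun x => jac ψ x i j) = ∑ i, sInt (F0 i) fun x => ψ x i

/-- `φ` is an admissible dual potential: `h_*(φ(y) - φ(x)) ≤ |y - x|`. -/
def admissible {m n : ℕ} (h : (Fin m → ℝ) → ℝ) (φ : Euc n → Fin m → ℝ) : Prop :=
  ∀ x y : Euc n, dualNorm h (φ y - φ x) ≤ ‖y - x‖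

/-- The dual objective `∫ φ · dF₀`. -/
def intDual {m n : ℕ} (F0 : VecMeas m n) (φ : Euc n → Fin m → ℝ) : ℝ :=
  ∑ i, sInt (F0 i) fun x => φ x i



variable {m : ℕ} {h : (Fin m → ℝ) → ℝ}

lemma IsNorm.zero (hh : IsNorm h) : h 0 = 0 := by
  have := hh.2.1 0 0; simpa using this

lemma IsNorm.neg' (hh : IsNorm h) (x : Fin m → ℝ) : h (-x) = h x := by
  have := hh.2.1 (-1) x; simpa using this

lemma IsNorm.nonneg (hh : IsNorm h) (x : Fin m → ℝ) : 0 ≤ h x := by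
  have h1 := hh.1 x (-x)
  rw [add_neg_cancel, hh.zero, hh.neg'] at h1
  linarith

lemma IsNorm.sum_le (hh : IsNorm h) {ι : Type*} (s : Finset ι) (f : ι → Fin m → ℝ) :
    h (∑ i ∈ s, f i) ≤ ∑ i ∈ s, h (f i) := by
  classical
  induction s using Finset.cons_induction with
  | empty => simp [hh.zero]
  | cons a s ha ih =>
      rw [Finset.sum_cons, Finset.sum_cons]
      exact le_trans (hh.1 _ _) (by linarith)

/-- the canonical basis vector of `Fin m → ℝ` -/
def bas (m : ℕ) (i : Fin m) : Fin m → ℝ := Pi.single i 1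

lemma IsNorm.le_C1 (hh : IsNorm h) (θ : Fin m → ℝ) :
    h θ ≤ (∑ i, h (bas m i)) * ‖θ‖ := by
  have hexp : θ = ∑ i, θ i • bas m i := by
    funext j
    rw [Finset.sum_apply]
    simp [bas, Pi.single_apply]
  calc h θ = h (∑ i, θ i • bas m i) := by rw [← hexp]
    _ ≤ ∑ i, h (θ i • bas m i) := hh.sum_le _ _
    _ = ∑ i, |θ i| * h (bas m i) := by simp [hh.2.1]
    _ ≤ ∑ i, ‖θ‖ * h (bas m i) := by
        refine Finset.sum_le_sum fun i _ => ?_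
        exact mul_le_mul_of_nonneg_right (by simpa using norm_le_pi_norm θ i) (hh.nonneg _)
    _ = (∑ i, h (bas m i)) * ‖θ‖ := by rw [Finset.sum_mul]; exact Finset.sum_congr rfl fun i _ => mul_comm _ _

lemma IsNorm.continuous (hh : IsNorm h) : Continuous h := by
  set C := ∑ i, h (bas m i) with hC
  have hC0 : 0 ≤ C := Finset.sum_nonneg fun i _ => hh.nonneg _
  have lip : LipschitzWith (Real.toNNReal C) h := by
    refine LipschitzWith.of_dist_le_mul fun x y => ?_
    have h1 : h x - h y ≤ h (x - y) := by
      have := hh.1 (x - y) y; simp only [sub_add_cancel] at this; linarith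
    have h2 : h y - h x ≤ h (x - y) := by
      have h2' := hh.1 (y - x) x
      simp only [sub_add_cancel] at h2'
      have h2'' : h (y - x) = h (x - y) := by rw [← hh.neg' (x - y), neg_sub]
      linarith
    have h3 : h (x - y) ≤ C * ‖x - y‖ := hh.le_C1 _
    rw [Real.dist_eq, dist_eq_norm]
    have hcc : C ≤ (Real.toNNReal C : ℝ) := by simp [Real.coe_toNNReal _ hC0]
    have h4 : C * ‖x - y‖ ≤ (Real.toNNReal C : ℝ) * ‖x - y‖ :=
      mul_le_mul_of_nonneg_right hcc (norm_nonneg _)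
    rw [abs_sub_le_iff]
    exact ⟨by linarith, by linarith⟩
  exact lip.continuous

lemma IsNorm.exists_lower (hh : IsNorm h) (hm : 0 < m) :
    ∃ c > 0, ∀ θ, c * ‖θ‖ ≤ h θ := by
  have : Nontrivial (Fin m → ℝ) := by
    refine ⟨0, bas m ⟨0, hm⟩, fun he => ?_⟩
    have := congrFun he ⟨0, hm⟩
    simp [bas] at this
  have hsph : (Metric.sphere (0 : Fin m → ℝ) 1).Nonempty :=
    NormedSpace.sphere_nonempty.2 zero_le_one
  obtain ⟨θ₀, hθ₀S, hmin⟩ :=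
    (isCompact_sphere (0 : Fin m → ℝ) 1).exists_isMinOn hsph hh.continuous.continuousOn
  have hθ₀ : ‖θ₀‖ = 1 := by simpa using hθ₀S
  have hc0 : 0 < h θ₀ := by
    rcases lt_or_eq_of_le (hh.nonneg θ₀) with h1 | h1
    · exact h1
    · exfalso
      have := hh.2.2 θ₀ h1.symm
      rw [this] at hθ₀; simp at hθ₀
  refine ⟨h θ₀, hc0, fun θ => ?_⟩
  rcases eq_or_ne θ 0 with rfl | hne
  · simp [hh.zero, hh.nonneg]
  · have hn : (0:ℝ) < ‖θ‖ := norm_pos_iff.2 hne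
    have hmem : ‖θ‖⁻¹ • θ ∈ Metric.sphere (0 : Fin m → ℝ) 1 := by
      simp [norm_smul, abs_of_pos (inv_pos.2 hn), inv_mul_cancel₀ hn.ne']
    have hm2 : h θ₀ ≤ h (‖θ‖⁻¹ • θ) := hmin hmem
    have heq : h (‖θ‖⁻¹ • θ) = ‖θ‖⁻¹ * h θ := by
      rw [hh.2.1, abs_of_pos (inv_pos.2 hn)]
    rw [heq] at hm2
    calc h θ₀ * ‖θ‖ ≤ (‖θ‖⁻¹ * h θ) * ‖θ‖ := mul_le_mul_of_nonneg_right hm2 hn.le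
      _ = h θ := by field_simp

lemma IsNorm.bas_pos (hh : IsNorm h) (hm : 0 < m) (i : Fin m) : 0 < h (bas m i) := by
  obtain ⟨c, hc, hlow⟩ := hh.exists_lower hm
  have h1 := hlow (bas m i)
  have h2 : ‖bas m i‖ = 1 := by
    rw [bas, Pi.norm_single]; simp
  rw [h2, mul_one] at h1
  linarith

lemma dualNorm_set_nonempty (hh : IsNorm h) (g : Fin m → ℝ) :
    Set.Nonempty {r | ∃ θ : Fin m → ℝ, h θ ≤ 1 ∧ r = ∑ i, g i * θ i} :=
  ⟨0, 0, by rw [hh.zero]; exact zero_le_one, by simp⟩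

lemma dualNorm_set_bddAbove (hh : IsNorm h) (hm : 0 < m) (g : Fin m → ℝ) :
    BddAbove {r | ∃ θ : Fin m → ℝ, h θ ≤ 1 ∧ r = ∑ i, g i * θ i} := by
  obtain ⟨c, hc, hlow⟩ := hh.exists_lower hm
  refine ⟨(∑ i, |g i|) * c⁻¹, ?_⟩
  rintro r ⟨θ, hθ, rfl⟩
  have h1 : c * ‖θ‖ ≤ 1 := le_trans (hlow θ) hθ
  have hθn : ‖θ‖ ≤ c⁻¹ := by
    have h2 := mul_le_mul_of_nonneg_left h1 (inv_pos.2 hc).le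
    rwa [← mul_assoc, inv_mul_cancel₀ hc.ne', one_mul, mul_one] at h2
  calc ∑ i, g i * θ i ≤ ∑ i, |g i| * c⁻¹ := by
        refine Finset.sum_le_sum fun i _ => ?_
        calc g i * θ i ≤ |g i * θ i| := le_abs_self _
          _ = |g i| * |θ i| := abs_mul _ _
          _ ≤ |g i| * c⁻¹ := by
            refine mul_le_mul_of_nonneg_left ?_ (abs_nonneg _)
            exact le_trans (by simpa using norm_le_pi_norm θ i) hθn
    _ = (∑ i, |g i|) * c⁻¹ := (Finset.sum_mul ..).symm

lemma le_dualNorm (hh : IsNorm h) (hm : 0 < m) {θ g : Fin m → ℝ} (hθ : h θ ≤ 1) :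
    ∑ i, g i * θ i ≤ dualNorm h g :=
  le_csSup (dualNorm_set_bddAbove hh hm g) ⟨θ, hθ, rfl⟩

lemma dualNorm_nonneg (hh : IsNorm h) (hm : 0 < m) (g : Fin m → ℝ) : 0 ≤ dualNorm h g := by
  have := le_dualNorm hh hm (g := g) (θ := 0) (by rw [hh.zero]; exact zero_le_one)
  simpa using this

lemma dualNorm_le (hh : IsNorm h) {g : Fin m → ℝ} {r : ℝ} (hr : 0 ≤ r)
    (hb : ∀ θ, h θ ≤ 1 → ∑ i, g i * θ i ≤ r) : dualNorm h g ≤ r :=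
  Real.sSup_le (by rintro x ⟨θ, h1, rfl⟩; exact hb θ h1) hr

variable {n : ℕ}

lemma matVec_single (M : Fin m → Fin n → ℝ) (j : Fin n) :
    matVec M (EuclideanSpace.single j (1:ℝ)) = fun i => M i j := by
  funext i
  simp [matVec, EuclideanSpace.single_apply]

lemma inSubdiffH_entry_le (hh : IsNorm h) (hm : 0 < m) {M : Fin m → Fin n → ℝ}
    (hM : inSubdiffH h M) (i : Fin m) (j : Fin n) : |M i j| ≤ h (bas m i) := by
  have hb := hh.bas_pos hm i
  have h1 : dualNorm h (fun i => M i j) ≤ 1 := by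
    have := hM (EuclideanSpace.single j (1:ℝ)) (by rw [EuclideanSpace.norm_single]; simp)
    rwa [matVec_single] at this
  have key : ∀ s : ℝ, |s| = 1 → s * M i j ≤ h (bas m i) := by
    intro s hs
    have hθ : h ((h (bas m i))⁻¹ • (s • bas m i)) ≤ 1 := by
      rw [hh.2.1, hh.2.1, abs_of_pos (inv_pos.2 hb), hs, one_mul,
        inv_mul_cancel₀ hb.ne']
    have h2 := le_dualNorm hh hm (g := fun i => M i j) hθ
    have h3 : ∑ i', M i' j * ((h (bas m i))⁻¹ • (s • bas m i)) i' =
        (h (bas m i))⁻¹ * (s * M i j) := by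
      rw [Finset.sum_eq_single i]
      · simp [bas, mul_comm]; ring
      · intro b _ hb'; simp [bas, Pi.single_apply, hb']
      · simp
    rw [h3] at h2
    have h4 := le_trans h2 h1
    calc s * M i j = h (bas m i) * ((h (bas m i))⁻¹ * (s * M i j)) := by field_simp
      _ ≤ h (bas m i) * 1 := mul_le_mul_of_nonneg_left h4 hb.le
      _ = h (bas m i) := mul_one _
  have k1 := key 1 (by simp)
  have k2 := key (-1) (by simp)
  rw [one_mul] at k1
  rw [neg_one_mul] at k2
  rcases abs_cases (M i j) with ⟨he, _⟩ | ⟨he, _⟩ <;> rw [he] <;> assumption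

lemma inSubdiffH_zero (hh : IsNorm h) : inSubdiffH h (0 : Fin m → Fin n → ℝ) := by
  intro u hu
  refine dualNorm_le hh zero_le_one fun θ hθ => ?_
  have : matVec (0 : Fin m → Fin n → ℝ) u = 0 := by
    funext i; simp [matVec]
  rw [this]; simp

lemma genNorm_set_bddAbove (hh : IsNorm h) (hm : 0 < m) (N : Fin m → Fin n → ℝ) :
    BddAbove {r | ∃ M : Fin m → Fin n → ℝ, inSubdiffH h M ∧ r = frob M N} := by
  refine ⟨∑ i, ∑ j, h (bas m i) * |N i j|, ?_⟩
  rintro r ⟨M, hM, rfl⟩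
  refine Finset.sum_le_sum fun i _ => Finset.sum_le_sum fun j _ => ?_
  calc M i j * N i j ≤ |M i j * N i j| := le_abs_self _
    _ = |M i j| * |N i j| := abs_mul _ _
    _ ≤ h (bas m i) * |N i j| :=
      mul_le_mul_of_nonneg_right (inSubdiffH_entry_le hh hm hM i j) (abs_nonneg _)

lemma frob_le_genNorm (hh : IsNorm h) (hm : 0 < m) {M N : Fin m → Fin n → ℝ}
    (hM : inSubdiffH h M) : frob M N ≤ genNorm h N :=
  le_csSup (genNorm_set_bddAbove hh hm N) ⟨M, hM, rfl⟩

lemma genNorm_nonneg (hh : IsNorm h) (hm : 0 < m) (N : Fin m → Fin n → ℝ) :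
    0 ≤ genNorm h N := by
  have := frob_le_genNorm hh hm (N := N) (inSubdiffH_zero hh)
  simpa [frob] using this

lemma genNorm_le_bnd (hh : IsNorm h) (hm : 0 < m) (N : Fin m → Fin n → ℝ) :
    genNorm h N ≤ ∑ i, ∑ j, h (bas m i) * |N i j| := by
  refine Real.sSup_le ?_ ?_
  · rintro r ⟨M, hM, rfl⟩
    refine Finset.sum_le_sum fun i _ => Finset.sum_le_sum fun j _ => ?_
    calc M i j * N i j ≤ |M i j * N i j| := le_abs_self _
      _ = |M i j| * |N i j| := abs_mul _ _
      _ ≤ h (bas m i) * |N i j| :=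
        mul_le_mul_of_nonneg_right (inSubdiffH_entry_le hh hm hM i j) (abs_nonneg _)
  · exact Finset.sum_nonneg fun i _ => Finset.sum_nonneg fun j _ =>
      mul_nonneg (hh.nonneg _) (abs_nonneg _)

lemma genNorm_zero (hh : IsNorm h) (hm : 0 < m) : genNorm h (0 : Fin m → Fin n → ℝ) = 0 := by
  refine le_antisymm ?_ (genNorm_nonneg hh hm 0)
  have := genNorm_le_bnd hh hm (0 : Fin m → Fin n → ℝ)
  simpa using this

/-! ### total variation lemmas -/

abbrev posM {n : ℕ} (ν : MeasureTheory.SignedMeasure (Euc n)) : Measure (Euc n) :=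
  ν.toJordanDecomposition.posPart

abbrev negM {n : ℕ} (ν : MeasureTheory.SignedMeasure (Euc n)) : Measure (Euc n) :=
  ν.toJordanDecomposition.negPart

def massR {n : ℕ} (ν : MeasureTheory.SignedMeasure (Euc n)) : ℝ :=
  (posM ν Set.univ).toReal + (negM ν Set.univ).toReal

lemma massR_nonneg {n : ℕ} (ν : MeasureTheory.SignedMeasure (Euc n)) : 0 ≤ massR ν := by
  unfold massR; positivity

lemma sm_apply {n : ℕ} (ν : MeasureTheory.SignedMeasure (Euc n)) {B : Set (Euc n)}
    (hB : MeasurableSet B) : ν B = (posM ν B).toReal - (negM ν B).toReal := by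
  conv_lhs => rw [← ν.toSignedMeasure_toJordanDecomposition]
  rw [JordanDecomposition.toSignedMeasure, VectorMeasure.sub_apply,
    Measure.toSignedMeasure_apply_measurable hB, Measure.toSignedMeasure_apply_measurable hB]
  rfl

lemma abs_sm_apply_le {n : ℕ} (ν : MeasureTheory.SignedMeasure (Euc n)) {B : Set (Euc n)}
    (hB : MeasurableSet B) : |ν B| ≤ (posM ν B).toReal + (negM ν B).toReal := by
  rw [sm_apply ν hB]
  have h1 : (0:ℝ) ≤ (posM ν B).toReal := ENNReal.toReal_nonneg
  have h2 : (0:ℝ) ≤ (negM ν B).toReal := ENNReal.toReal_nonneg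
  rw [abs_sub_le_iff]; constructor <;> linarith

lemma partition_tsum {n : ℕ} (μ : Measure (Euc n)) [IsFiniteMeasure μ] (B : ℕ → Set (Euc n))
    (hmeas : ∀ k, MeasurableSet (B k)) (hdisj : Pairwise (Function.onFun Disjoint B))
    (hunion : (⋃ k, B k) = Set.univ) :
    Summable (fun k => (μ (B k)).toReal) ∧
      ∑' k, (μ (B k)).toReal = (μ Set.univ).toReal := by
  have h1 : ∑' k, μ (B k) = μ Set.univ := by
    rw [← measure_iUnion hdisj hmeas, hunion]
  constructor
  · exact ENNReal.summable_toReal (by rw [h1]; exact measure_ne_top μ _)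
  · rw [← ENNReal.tsum_toReal_eq (fun k => measure_ne_top μ _), h1]

lemma tvH_set_bddAbove {m n : ℕ} {h : (Fin m → ℝ) → ℝ} (hh : IsNorm h) (hm : 0 < m)
    (F : MatMeas m n) :
    BddAbove {r | ∃ B : ℕ → Set (Euc n), (∀ k, MeasurableSet (B k)) ∧
      Pairwise (Function.onFun Disjoint B) ∧ (⋃ k, B k) = Set.univ ∧
      r = ∑' k, genNorm h (fun i j => F i j (B k))} := by
  refine ⟨∑ i, ∑ j, h (bas m i) * massR (F i j), ?_⟩
  rintro r ⟨B, hmeas, hdisj, hunion, rfl⟩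
  set f : Fin m → Fin n → ℕ → ℝ := fun i j k =>
    ((posM (F i j) (B k)).toReal + (negM (F i j) (B k)).toReal) with hf
  have hfsum : ∀ i j, Summable (f i j) := fun i j =>
    ((partition_tsum (posM (F i j)) B hmeas hdisj hunion).1).add
      ((partition_tsum (negM (F i j)) B hmeas hdisj hunion).1)
  have hftsum : ∀ i j, ∑' k, f i j k = massR (F i j) := fun i j => by
    rw [hf]
    rw [Summable.tsum_add ((partition_tsum (posM (F i j)) B hmeas hdisj hunion).1)
      ((partition_tsum (negM (F i j)) B hmeas hdisj hunion).1),
      (partition_tsum (posM (F i j)) B hmeas hdisj hunion).2,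
      (partition_tsum (negM (F i j)) B hmeas hdisj hunion).2]
    rfl
  set E : ℕ → ℝ := fun k => ∑ i, ∑ j, h (bas m i) * f i j k with hE
  have hEsum : Summable E := by
    refine summable_sum fun i _ => summable_sum fun j _ => ?_
    exact (hfsum i j).mul_left _
  have hEle : ∑' k, E k ≤ ∑ i, ∑ j, h (bas m i) * massR (F i j) := by
    rw [hE, Summable.tsum_finsetSum fun i _ => summable_sum fun j _ => (hfsum i j).mul_left _]
    refine Finset.sum_le_sum fun i _ => ?_
    rw [Summable.tsum_finsetSum fun j _ => (hfsum i j).mul_left _]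
    refine Finset.sum_le_sum fun j _ => ?_
    rw [tsum_mul_left, hftsum i j]
  have hterm : ∀ k, genNorm h (fun i j => F i j (B k)) ≤ E k := by
    intro k
    refine le_trans (genNorm_le_bnd hh hm _) ?_
    refine Finset.sum_le_sum fun i _ => Finset.sum_le_sum fun j _ => ?_
    exact mul_le_mul_of_nonneg_left (abs_sm_apply_le (F i j) (hmeas k)) (hh.nonneg _)
  by_cases hs : Summable (fun k => genNorm h (fun i j => F i j (B k)))
  · exact le_trans (Summable.tsum_le_tsum hterm hs hEsum) hEle
  · rw [tsum_eq_zero_of_not_summable hs]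
    refine Finset.sum_nonneg fun i _ => Finset.sum_nonneg fun j _ =>
      mul_nonneg (hh.nonneg _) (massR_nonneg _)

lemma le_tvH {m n : ℕ} {h : (Fin m → ℝ) → ℝ} (hh : IsNorm h) (hm : 0 < m)
    (F : MatMeas m n) (B : ℕ → Set (Euc n)) (hmeas : ∀ k, MeasurableSet (B k))
    (hdisj : Pairwise (Function.onFun Disjoint B)) (hunion : (⋃ k, B k) = Set.univ) :
    ∑' k, genNorm h (fun i j => F i j (B k)) ≤ tvH h F :=
  le_csSup (tvH_set_bddAbove hh hm F) ⟨B, hmeas, hdisj, hunion, rfl⟩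

/-! ### signed integral lemmas -/

def vanishesOutside {n : ℕ} (ν : MeasureTheory.SignedMeasure (Euc n)) (K : Set (Euc n)) : Prop :=
  ∀ B : Set (Euc n), MeasurableSet B → Disjoint B K → ν B = 0

lemma posM_compl {n : ℕ} {ν : MeasureTheory.SignedMeasure (Euc n)} {K : Set (Euc n)}
    (hK : MeasurableSet K) (hv : vanishesOutside ν K) :
    posM ν Kᶜ = 0 ∧ negM ν Kᶜ = 0 := by
  obtain ⟨i, hi₁, hi₂, hi₃, hpos, hneg⟩ := ν.toJordanDecomposition_spec
  constructor
  · rw [posM, hpos, SignedMeasure.toMeasureOfZeroLE_apply _ hi₂ hi₁ hK.compl]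
    have h0 : ν (i ∩ Kᶜ) = 0 :=
      hv _ (hi₁.inter hK.compl) (Set.disjoint_left.2 fun x hx => hx.2)
    simp [h0]
  · rw [negM, hneg, SignedMeasure.toMeasureOfLEZero, SignedMeasure.toMeasureOfZeroLE_apply _ _ hi₁.compl hK.compl]
    have h0 : ν (iᶜ ∩ Kᶜ) = 0 :=
      hv _ (hi₁.compl.inter hK.compl) (Set.disjoint_left.2 fun x hx => hx.2)
    simp [h0]

lemma ae_mem_of_vanish {n : ℕ} {μ : Measure (Euc n)} {K : Set (Euc n)} (hμ : μ Kᶜ = 0) :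
    ∀ᵐ x ∂μ, x ∈ K := by
  rw [MeasureTheory.ae_iff]
  exact hμ

lemma sInt_abs_le {n : ℕ} {ν : MeasureTheory.SignedMeasure (Euc n)} {K : Set (Euc n)}
    (hK : MeasurableSet K) (hv : vanishesOutside ν K) {f : Euc n → ℝ} {C : ℝ} (hC : 0 ≤ C)
    (hf : ∀ x ∈ K, |f x| ≤ C) : |sInt ν f| ≤ C * massR ν := by
  obtain ⟨hp, hn⟩ := posM_compl hK hv
  have h1 : ‖∫ x, f x ∂posM ν‖ ≤ C * ((posM ν) Set.univ).toReal := by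
    refine norm_integral_le_of_norm_le_const ?_
    filter_upwards [ae_mem_of_vanish hp] with x hx using by simpa using hf x hx
  have h2 : ‖∫ x, f x ∂negM ν‖ ≤ C * ((negM ν) Set.univ).toReal := by
    refine norm_integral_le_of_norm_le_const ?_
    filter_upwards [ae_mem_of_vanish hn] with x hx using by simpa using hf x hx
  rw [sInt, massR]
  calc |∫ x, f x ∂posM ν - ∫ x, f x ∂negM ν| ≤ |∫ x, f x ∂posM ν| + |∫ x, f x ∂negM ν| :=
        abs_sub _ _
    _ ≤ C * ((posM ν) Set.univ).toReal + C * ((negM ν) Set.univ).toReal := by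
        rw [← Real.norm_eq_abs, ← Real.norm_eq_abs]
        exact add_le_add h1 h2
    _ = C * ((posM ν Set.univ).toReal + (negM ν Set.univ).toReal) := by ring

lemma sInt_sub {n : ℕ} (ν : MeasureTheory.SignedMeasure (Euc n)) {f g : Euc n → ℝ}
    (hf1 : Integrable f (posM ν)) (hf2 : Integrable f (negM ν))
    (hg1 : Integrable g (posM ν)) (hg2 : Integrable g (negM ν)) :
    sInt ν (fun x => f x - g x) = sInt ν f - sInt ν g := by
  unfold sInt
  rw [integral_sub hf1 hg1, integral_sub hf2 hg2]
  ring

lemma integrable_of_bound_on {n : ℕ} {μ : Measure (Euc n)} [IsFiniteMeasure μ]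
    {K : Set (Euc n)} (hμ : μ Kᶜ = 0) {f : Euc n → ℝ} (hmf : AEStronglyMeasurable f μ)
    {C : ℝ} (hf : ∀ x ∈ K, |f x| ≤ C) : Integrable f μ := by
  refine ⟨hmf, ?_⟩
  refine HasFiniteIntegral.of_bounded (C := C) ?_
  filter_upwards [ae_mem_of_vanish hμ] with x hx using by simpa using hf x hx

lemma sInt_simple {n : ℕ} (ν : MeasureTheory.SignedMeasure (Euc n)) (N : ℕ) (a : ℕ → ℝ)
    (Bs : ℕ → Set (Euc n)) (hmeas : ∀ k, MeasurableSet (Bs k)) :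
    sInt ν (fun x => ∑ k ∈ Finset.range N, Set.indicator (Bs k) (fun _ => a k) x) =
      ∑ k ∈ Finset.range N, a k * ν (Bs k) := by
  have hint : ∀ (μ : Measure (Euc n)) [IsFiniteMeasure μ],
      ∀ k ∈ Finset.range N, Integrable (fun x => Set.indicator (Bs k) (fun _ => a k) x) μ :=
    fun μ _ k _ => (integrable_const (a k)).indicator (hmeas k)
  unfold sInt
  rw [integral_finset_sum _ (hint _), integral_finset_sum _ (hint _)]
  rw [← Finset.sum_sub_distrib]
  refine Finset.sum_congr rfl fun k _ => ?_
  rw [integral_indicator_const _ (hmeas k), integral_indicator_const _ (hmeas k),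
    sm_apply ν (hmeas k)]
  simp only [smul_eq_mul, measureReal_def]
  ring

/-! ### partitions -/

lemma exists_partition {n : ℕ} {K : Set (Euc n)} (hK : IsCompact K) {δ : ℝ} (hδ : 0 < δ) :
    ∃ (N : ℕ) (c : ℕ → Euc n) (B : ℕ → Set (Euc n)),
      (∀ k, MeasurableSet (B k)) ∧ Pairwise (Function.onFun Disjoint B) ∧
      (⋃ k, B k) = Set.univ ∧
      (∀ k, k < N → c k ∈ K ∧ B k ⊆ Metric.ball (c k) δ) ∧
      (∀ x ∈ K, ∃ k, k < N ∧ x ∈ B k) ∧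
      (∀ k, N ≤ k → Disjoint (B k) K) := by
  obtain ⟨t, htK, htfin, hcover⟩ := hK.finite_cover_balls hδ
  set l := htfin.toFinset.toList with hl
  set N := l.length with hN
  set c : ℕ → Euc n := fun k => l.getD k 0 with hc
  have hcK : ∀ k, k < N → c k ∈ K := by
    intro k hk
    have hmem : l.getD k 0 ∈ l := by
      rw [List.getD_eq_getElem l 0 hk]
      exact List.getElem_mem _
    have : c k ∈ htfin.toFinset := by rwa [← Finset.mem_toList, ← hl]
    exact htK (htfin.mem_toFinset.1 this)
  set U := ⋃ (k : ℕ), ⋃ (_ : k < N), Metric.ball (c k) δ with hU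
  have hKU : K ⊆ U := by
    intro x hx
    obtain ⟨y, hyt, hxy⟩ := Set.mem_iUnion₂.1 (hcover hx)
    have hyl : y ∈ l := by rw [hl, Finset.mem_toList]; exact htfin.mem_toFinset.2 hyt
    obtain ⟨k, hk, hky⟩ := List.getElem_of_mem hyl
    refine Set.mem_iUnion₂.2 ⟨k, hk, ?_⟩
    have : c k = y := by simp only [hc]; rw [List.getD_eq_getElem l 0 hk]; exact hky
    rwa [this]
  set B : ℕ → Set (Euc n) := fun k =>
    if k < N then Metric.ball (c k) δ \ ⋃ (j : ℕ), ⋃ (_ : j < k), Metric.ball (c j) δ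
    else if k = N then Uᶜ else ∅ with hB
  have hBsub : ∀ k, k < N → B k ⊆ Metric.ball (c k) δ := by
    intro k hk
    simp only [hB]
    rw [if_pos hk]
    exact Set.diff_subset
  have hBU : ∀ k, k < N → B k ⊆ U := by
    intro k hk x hx
    exact Set.mem_iUnion₂.2 ⟨k, hk, hBsub k hk hx⟩
  have hBN : B N = Uᶜ := by
    simp [hB, Nat.lt_irrefl]
  have hBgt : ∀ k, N < k → B k = ∅ := by
    intro k hk
    simp only [hB]
    rw [if_neg (by omega), if_neg (by omega)]
  have hmeas : ∀ k, MeasurableSet (B k) := by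
    intro k
    simp only [hB]
    split_ifs
    · exact measurableSet_ball.diff (MeasurableSet.iUnion fun j =>
        MeasurableSet.iUnion fun _ => measurableSet_ball)
    · refine MeasurableSet.compl ?_
      exact MeasurableSet.iUnion fun k => MeasurableSet.iUnion fun _ => measurableSet_ball
    · exact MeasurableSet.empty
  have hfind : ∀ x ∈ U, ∃ k, k < N ∧ x ∈ B k := by
    intro x hx
    obtain ⟨k, hk, hxk⟩ := Set.mem_iUnion₂.1 hx
    have hP : ∃ k, k < N ∧ x ∈ Metric.ball (c k) δ := ⟨k, hk, hxk⟩
    classical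
    set k₀ := Nat.find hP with hk₀
    obtain ⟨hk₀N, hxk₀⟩ := Nat.find_spec hP
    refine ⟨k₀, hk₀N, ?_⟩
    simp only [hB]
    rw [if_pos hk₀N]
    refine ⟨hxk₀, ?_⟩
    intro hmem
    obtain ⟨j, hjlt⟩ := Set.mem_iUnion.1 hmem
    obtain ⟨hjk, hxj⟩ := Set.mem_iUnion.1 hjlt
    exact Nat.find_min hP hjk ⟨lt_trans hjk hk₀N, hxj⟩
  have hdisj' : ∀ k j, k < j → Disjoint (B k) (B j) := by
    intro k j hkj
    rcases lt_trichotomy j N with hjN | hjN | hjN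
    · have hkN : k < N := lt_trans hkj hjN
      rw [Set.disjoint_left]
      intro x hxk hxj
      simp only [hB] at hxj; rw [if_pos hjN] at hxj
      exact hxj.2 (Set.mem_iUnion₂.2 ⟨k, hkj, hBsub k hkN hxk⟩)
    · subst hjN
      have hkN : k < N := hkj
      rw [hBN, Set.disjoint_compl_right_iff_subset]
      exact hBU k hkN
    · rw [hBgt j hjN]
      exact Set.disjoint_empty _
  have hdisj : Pairwise (Function.onFun Disjoint B) := by
    intro k j hkj
    rcases lt_or_gt_of_ne hkj with hlt | hgt
    · exact hdisj' k j hlt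
    · exact (hdisj' j k hgt).symm
  have hunion : (⋃ k, B k) = Set.univ := by
    rw [Set.eq_univ_iff_forall]
    intro x
    by_cases hx : x ∈ U
    · obtain ⟨k, _, hk⟩ := hfind x hx
      exact Set.mem_iUnion.2 ⟨k, hk⟩
    · refine Set.mem_iUnion.2 ⟨N, ?_⟩
      rw [hBN]
      exact hx
  refine ⟨N, c, B, hmeas, hdisj, hunion, fun k hk => ⟨hcK k hk, hBsub k hk⟩,
    fun x hx => hfind x (hKU hx), ?_⟩
  intro k hk
  rcases eq_or_lt_of_le hk with heq | hgt
  · subst heq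
    rw [hBN, Set.disjoint_left]
    intro x hx hxK
    exact hx (hKU hxK)
  · rw [hBgt k hgt]
    exact Set.empty_disjoint _

/-! ### core integral inequality -/

lemma sInt_sum_le_tvH {m n : ℕ} {h : (Fin m → ℝ) → ℝ} (hh : IsNorm h) (hm : 0 < m)
    (F : MatMeas m n) {K : Set (Euc n)} (hKc : IsCompact K) (hs : suppIn F K)
    (G : Euc n → Fin m → Fin n → ℝ) (hGc : Continuous G)
    (hG : ∀ x ∈ K, inSubdiffH h (G x)) :
    ∑ i, ∑ j, sInt (F i j) (fun x => G x i j) ≤ tvH h F := by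
  classical
  set M₀ : ℝ := ∑ i, ∑ j, massR (F i j) with hM₀def
  have hM₀ : 0 ≤ M₀ :=
    Finset.sum_nonneg fun i _ => Finset.sum_nonneg fun j _ => massR_nonneg _
  have hKm : MeasurableSet K := hKc.isClosed.measurableSet
  have hvan : ∀ i j, vanishesOutside (F i j) K := fun i j B hB hd => hs B hB hd i j
  refine le_of_forall_pos_le_add fun η hη => ?_
  set ε := η / (M₀ + 1) with hεdef
  have hε : 0 < ε := div_pos hη (by linarith)
  -- uniform continuity of G on K
  have hUC : UniformContinuousOn G K :=
    hKc.uniformContinuousOn_of_continuous hGc.continuousOn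
  obtain ⟨δ, hδ, hδspec⟩ := (Metric.uniformContinuousOn_iff).1 hUC ε hε
  obtain ⟨N, c, B, hmeas, hdisj, hunion, hck, hcov, htail⟩ := exists_partition hKc hδ
  -- entrywise continuity
  have hGent : ∀ i j, Continuous fun x => G x i j := fun i j =>
    (continuous_apply j).comp ((continuous_apply i).comp hGc)
  -- the simple approximation
  set S : Fin m → Fin n → Euc n → ℝ := fun i j x =>
    ∑ k ∈ Finset.range N, Set.indicator (B k) (fun _ => G (c k) i j) x with hSdef
  have hSval : ∀ x ∈ K, ∀ k, k < N → x ∈ B k → ∀ i j, S i j x = G (c k) i j := by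
    intro x _ k hkN hxk i j
    simp only [hSdef]
    rw [Finset.sum_eq_single k]
    · rw [Set.indicator_of_mem hxk]
    · intro k' _ hk'
      refine Set.indicator_of_notMem ?_ _
      intro hxk'
      exact Set.disjoint_left.1 (hdisj hk'.symm) hxk hxk'
    · intro hk; exact absurd (Finset.mem_range.2 hkN) hk
  have hosc : ∀ i j, ∀ x ∈ K, |G x i j - S i j x| ≤ ε := by
    intro i j x hx
    obtain ⟨k, hkN, hxk⟩ := hcov x hx
    rw [hSval x hx k hkN hxk i j]
    obtain ⟨hckK, hball⟩ := hck k hkN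
    have hd : dist x (c k) < δ := by
      have := hball hxk
      rwa [Metric.mem_ball] at this
    have hGd : dist (G x) (G (c k)) < ε := hδspec x hx (c k) hckK hd
    have h1 : dist (G x i j) (G (c k) i j) ≤ dist (G x) (G (c k)) :=
      le_trans (dist_le_pi_dist (G x i) (G (c k) i) j)
        (dist_le_pi_dist (G x) (G (c k)) i)
    rw [Real.dist_eq] at h1
    linarith
  -- integrability of G entries
  have hint : ∀ i j (μ : Measure (Euc n)) [IsFiniteMeasure μ], μ Kᶜ = 0 →
      Integrable (fun x => G x i j) μ := by
    intro i j μ _ hμ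
    obtain ⟨C, hC⟩ := hKc.exists_bound_of_continuousOn (hGent i j).continuousOn
    exact integrable_of_bound_on hμ (hGent i j).aestronglyMeasurable hC
  have hintS : ∀ i j (μ : Measure (Euc n)) [IsFiniteMeasure μ], Integrable (S i j) μ := by
    intro i j μ _
    exact integrable_finset_sum _ fun k _ => (integrable_const _).indicator (hmeas k)
  -- main estimate per entry
  have hkey : ∀ i j, sInt (F i j) (fun x => G x i j) ≤
      (∑ k ∈ Finset.range N, G (c k) i j * F i j (B k)) + ε * massR (F i j) := by
    intro i j
    obtain ⟨hp0, hn0⟩ := posM_compl hKm (hvan i j)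
    have hsub := sInt_sub (F i j) (f := fun x => G x i j) (g := S i j)
      (hint i j _ hp0) (hint i j _ hn0) (hintS i j _) (hintS i j _)
    have habs : |sInt (F i j) (fun x => G x i j - S i j x)| ≤ ε * massR (F i j) :=
      sInt_abs_le hKm (hvan i j) hε.le (hosc i j)
    have hSint : sInt (F i j) (S i j) = ∑ k ∈ Finset.range N, G (c k) i j * F i j (B k) :=
      sInt_simple (F i j) N (fun k => G (c k) i j) B hmeas
    have := abs_le.1 habs
    rw [hsub, hSint] at this
    linarith [this.2]
  -- sum up
  have hsum : ∑ i, ∑ j, sInt (F i j) (fun x => G x i j) ≤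
      (∑ k ∈ Finset.range N, frob (G (c k)) (fun i j => F i j (B k))) + ε * M₀ := by
    calc ∑ i, ∑ j, sInt (F i j) (fun x => G x i j)
        ≤ ∑ i, ∑ j, ((∑ k ∈ Finset.range N, G (c k) i j * F i j (B k)) + ε * massR (F i j)) :=
          Finset.sum_le_sum fun i _ => Finset.sum_le_sum fun j _ => hkey i j
      _ = (∑ i, ∑ j, ∑ k ∈ Finset.range N, G (c k) i j * F i j (B k)) + ε * M₀ := by
          rw [hM₀def]
          rw [Finset.mul_sum]
          rw [← Finset.sum_add_distrib]
          refine Finset.sum_congr rfl fun i _ => ?_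
          rw [Finset.mul_sum, ← Finset.sum_add_distrib]
      _ = (∑ k ∈ Finset.range N, frob (G (c k)) (fun i j => F i j (B k))) + ε * M₀ := by
          congr 1
          calc ∑ i, ∑ j, ∑ k ∈ Finset.range N, G (c k) i j * (F i j) (B k)
              = ∑ i, ∑ k ∈ Finset.range N, ∑ j, G (c k) i j * (F i j) (B k) := by
                exact Finset.sum_congr rfl fun i _ => Finset.sum_comm
            _ = ∑ k ∈ Finset.range N, ∑ i, ∑ j, G (c k) i j * (F i j) (B k) :=
                Finset.sum_comm
            _ = ∑ k ∈ Finset.range N, frob (G (c k)) (fun i j => F i j (B k)) := rfl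
  have hgen : ∑ k ∈ Finset.range N, frob (G (c k)) (fun i j => F i j (B k)) ≤
      ∑ k ∈ Finset.range N, genNorm h (fun i j => F i j (B k)) := by
    refine Finset.sum_le_sum fun k hk => ?_
    exact frob_le_genNorm hh hm (hG (c k) (hck k (Finset.mem_range.1 hk)).1)
  have htsum : ∑ k ∈ Finset.range N, genNorm h (fun i j => F i j (B k)) =
      ∑' k, genNorm h (fun i j => F i j (B k)) := by
    refine (tsum_eq_sum ?_).symm
    intro k hk
    have hkN : N ≤ k := by
      by_contra hlt
      exact hk (Finset.mem_range.2 (by omega))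
    have hzero : (fun i j => F i j (B k)) = (0 : Fin m → Fin n → ℝ) := by
      funext i j
      exact hs (B k) (hmeas k) (htail k hkN) i j
    rw [hzero, genNorm_zero hh hm]
  have hεM : ε * M₀ ≤ η := by
    rw [hεdef]
    rw [div_mul_eq_mul_div, div_le_iff₀ (by linarith : (0:ℝ) < M₀ + 1)]
    nlinarith
  calc ∑ i, ∑ j, sInt (F i j) (fun x => G x i j)
      ≤ (∑ k ∈ Finset.range N, frob (G (c k)) (fun i j => F i j (B k))) + ε * M₀ := hsum
    _ ≤ (∑ k ∈ Finset.range N, genNorm h (fun i j => F i j (B k))) + ε * M₀ := by linarith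
    _ = (∑' k, genNorm h (fun i j => F i j (B k))) + ε * M₀ := by rw [htsum]
    _ ≤ tvH h F + ε * M₀ := by linarith [le_tvH hh hm F B hmeas hdisj hunion]
    _ ≤ tvH h F + η := by linarith

/-! ### admissible potentials: Lipschitz properties -/

lemma admissible_pair {m n : ℕ} {h : (Fin m → ℝ) → ℝ} (hh : IsNorm h) (hm : 0 < m)
    {φ : Euc n → Fin m → ℝ} (hφ : admissible h φ) {θ : Fin m → ℝ} (hθ : h θ ≤ 1)
    (x y : Euc n) : |∑ i, θ i * (φ x i - φ y i)| ≤ dist x y := by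
  have hdn : dualNorm h (φ x - φ y) ≤ dist x y := by
    rw [dist_eq_norm]
    calc dualNorm h (φ x - φ y) ≤ ‖x - y‖ := hφ y x
      _ = ‖x - y‖ := rfl
  have h1 : ∑ i, (φ x - φ y) i * θ i ≤ dualNorm h (φ x - φ y) := le_dualNorm hh hm hθ
  have h2 : ∑ i, (φ x - φ y) i * (-θ) i ≤ dualNorm h (φ x - φ y) := by
    refine le_dualNorm hh hm ?_
    rw [show (-θ) = -θ from rfl, hh.neg']; exact hθ
  have he : ∑ i, (φ x - φ y) i * θ i = ∑ i, θ i * (φ x i - φ y i) := by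
    refine Finset.sum_congr rfl fun i _ => ?_
    rw [Pi.sub_apply, mul_comm]
  have he2 : ∑ i, (φ x - φ y) i * (-θ) i = -∑ i, θ i * (φ x i - φ y i) := by
    rw [← Finset.sum_neg_distrib]
    refine Finset.sum_congr rfl fun i _ => ?_
    rw [Pi.sub_apply, Pi.neg_apply]; ring
  rw [he] at h1
  rw [he2] at h2
  rw [abs_le]
  constructor <;> linarith

lemma admissible_comp {m n : ℕ} {h : (Fin m → ℝ) → ℝ} (hh : IsNorm h) (hm : 0 < m)
    {φ : Euc n → Fin m → ℝ} (hφ : admissible h φ) (i : Fin m) (x y : Euc n) :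
    |φ x i - φ y i| ≤ h (bas m i) * dist x y := by
  have hb := hh.bas_pos hm i
  have hθ : h ((h (bas m i))⁻¹ • bas m i) ≤ 1 := by
    rw [hh.2.1, abs_of_pos (inv_pos.2 hb), inv_mul_cancel₀ hb.ne']
  have := admissible_pair hh hm hφ hθ x y
  have hsum : ∑ i', ((h (bas m i))⁻¹ • bas m i) i' * (φ x i' - φ y i') =
      (h (bas m i))⁻¹ * (φ x i - φ y i) := by
    rw [Finset.sum_eq_single i]
    · simp [bas]
    · intro b _ hb'; simp [bas, Pi.single_apply, hb']
    · simp
  have hsum2 : ∑ i', ((h (bas m i))⁻¹ • bas m i) i' * (φ x i' - φ y i') =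
      ∑ i', ((h (bas m i))⁻¹ • bas m i) i' * (φ x i' - φ y i') := rfl
  have h2 : |(h (bas m i))⁻¹ * (φ x i - φ y i)| ≤ dist x y := by
    rw [← hsum]
    exact admissible_pair hh hm hφ hθ x y
  rw [abs_mul, abs_of_pos (inv_pos.2 hb)] at h2
  calc |φ x i - φ y i| = h (bas m i) * ((h (bas m i))⁻¹ * |φ x i - φ y i|) := by field_simp
    _ ≤ h (bas m i) * dist x y := mul_le_mul_of_nonneg_left h2 hb.le

lemma admissible_comp_continuous {m n : ℕ} {h : (Fin m → ℝ) → ℝ} (hh : IsNorm h) (hm : 0 < m)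
    {φ : Euc n → Fin m → ℝ} (hφ : admissible h φ) (i : Fin m) :
    Continuous fun x => φ x i := by
  have : LipschitzWith (Real.toNNReal (h (bas m i))) fun x => φ x i := by
    refine LipschitzWith.of_dist_le_mul fun x y => ?_
    rw [Real.dist_eq]
    calc |φ x i - φ y i| ≤ h (bas m i) * dist x y := admissible_comp hh hm hφ i x y
      _ ≤ (Real.toNNReal (h (bas m i))) * dist x y := by
          refine mul_le_mul_of_nonneg_right ?_ dist_nonneg
          simp [Real.coe_toNNReal _ (hh.nonneg _)]
  exact this.continuous

/-! ### mollification -/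

def mollify {n : ℕ} (ρ : ContDiffBump (0 : Euc n)) (f : Euc n → ℝ) : Euc n → ℝ :=
  MeasureTheory.convolution (ρ.normed volume) f (ContinuousLinearMap.lsmul ℝ ℝ) volume

lemma mollify_apply {n : ℕ} (ρ : ContDiffBump (0 : Euc n)) (f : Euc n → ℝ) (x : Euc n) :
    mollify ρ f x = ∫ t, ρ.normed volume t * f (x - t) := by
  rw [mollify, MeasureTheory.convolution_def]
  simp [ContinuousLinearMap.lsmul_apply, smul_eq_mul]

lemma mollify_contDiff {n : ℕ} (ρ : ContDiffBump (0 : Euc n)) {f : Euc n → ℝ}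
    (hf : Continuous f) : ContDiff ℝ (⊤:ℕ∞) (mollify ρ f) :=
  ρ.hasCompactSupport_normed.contDiff_convolution_left _ ρ.contDiff_normed hf.locallyIntegrable

lemma mollify_integrand_integrable {n : ℕ} (ρ : ContDiffBump (0 : Euc n)) {f : Euc n → ℝ}
    (hf : Continuous f) (x : Euc n) :
    Integrable (fun t => ρ.normed volume t * f (x - t)) volume := by
  have hc : Continuous fun t => ρ.normed volume t * f (x - t) :=
    ρ.continuous_normed.mul (hf.comp (continuous_const.sub continuous_id))
  exact hc.integrable_of_hasCompactSupport ρ.hasCompactSupport_normed.mul_right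

lemma mollify_lipschitz {n : ℕ} (ρ : ContDiffBump (0 : Euc n)) {f : Euc n → ℝ} {c : ℝ}
    (hf : Continuous f) (hlip : ∀ x y, |f x - f y| ≤ c * dist x y) (x y : Euc n) :
    |mollify ρ f x - mollify ρ f y| ≤ c * dist x y := by
  rw [mollify_apply, mollify_apply,
    ← integral_sub (mollify_integrand_integrable ρ hf x) (mollify_integrand_integrable ρ hf y)]
  have hptw : ∀ t, ‖ρ.normed volume t * f (x - t) - ρ.normed volume t * f (y - t)‖ ≤
      ρ.normed volume t * (c * dist x y) := by
    intro t
    rw [← mul_sub, Real.norm_eq_abs, abs_mul, abs_of_nonneg (ρ.nonneg_normed t)]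
    refine mul_le_mul_of_nonneg_left ?_ (ρ.nonneg_normed t)
    have := hlip (x - t) (y - t)
    have hd : dist (x - t) (y - t) = dist x y := by
      rw [dist_eq_norm, dist_eq_norm]
      congr 1
      abel
    rwa [hd] at this
  calc |∫ t, (ρ.normed volume t * f (x - t) - ρ.normed volume t * f (y - t))|
      ≤ ∫ t, ‖ρ.normed volume t * f (x - t) - ρ.normed volume t * f (y - t)‖ := by
        rw [← Real.norm_eq_abs]
        exact norm_integral_le_integral_norm _
    _ ≤ ∫ t, ρ.normed volume t * (c * dist x y) := by
        refine integral_mono ?_ ?_ hptw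
        · exact ((mollify_integrand_integrable ρ hf x).sub (mollify_integrand_integrable ρ hf y)).norm
        · exact ρ.integrable_normed.mul_const _
    _ = c * dist x y := by
        rw [integral_mul_const, ρ.integral_normed, one_mul]

lemma mollify_dist_le {n : ℕ} (ρ : ContDiffBump (0 : Euc n)) {f : Euc n → ℝ} {c : ℝ}
    (hc : 0 ≤ c) (hf : Continuous f) (hlip : ∀ x y, |f x - f y| ≤ c * dist x y) (x : Euc n) :
    |mollify ρ f x - f x| ≤ c * ρ.rOut := by
  have hb : ∀ y ∈ Metric.ball x ρ.rOut, dist (f y) (f x) ≤ c * ρ.rOut := by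
    intro y hy
    rw [Metric.mem_ball] at hy
    calc dist (f y) (f x) = |f y - f x| := Real.dist_eq _ _
      _ ≤ c * dist y x := hlip y x
      _ ≤ c * ρ.rOut := mul_le_mul_of_nonneg_left hy.le hc
  have h3 := ρ.dist_normed_convolution_le (μ := volume) hf.aestronglyMeasurable hb
  rw [Real.dist_eq] at h3
  exact h3

/-! ### basis expansion and the mollified potential -/

lemma euc_basis_expand {n : ℕ} (u : Euc n) :
    u = ∑ j, u j • EuclideanSpace.single j (1:ℝ) := by
  ext j'
  have : (∑ j, u j • EuclideanSpace.single j (1:ℝ)) j' =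
      ∑ j, (u j • EuclideanSpace.single j (1:ℝ)) j' :=
    by rw [WithLp.ofLp_sum, Finset.sum_apply]
  rw [this]
  simp [EuclideanSpace.single_apply]

lemma fderiv_matVec {m n : ℕ} {Φ : Euc n → Fin m → ℝ} (hΦ : ContDiff ℝ (⊤:ℕ∞) Φ)
    (x : Euc n) (u : Euc n) (i : Fin m) :
    matVec (jac Φ x) u i = fderiv ℝ Φ x u i := by
  have hdiff : DifferentiableAt ℝ Φ x :=
    (hΦ.differentiable (by simp)).differentiableAt
  conv_rhs => rw [euc_basis_expand u]
  rw [map_sum]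
  have : (∑ j, fderiv ℝ Φ x (u j • EuclideanSpace.single j (1:ℝ))) i =
      ∑ j, (fderiv ℝ Φ x (u j • EuclideanSpace.single j (1:ℝ))) i :=
    Finset.sum_apply i Finset.univ _
  rw [this]
  simp only [matVec, jac]
  refine Finset.sum_congr rfl fun j _ => ?_
  rw [ContinuousLinearMap.map_smul]
  rw [Pi.smul_apply, smul_eq_mul, mul_comm]

lemma moll_main {m n : ℕ} {h : (Fin m → ℝ) → ℝ} (hh : IsNorm h) (hm : 0 < m)
    {φ : Euc n → Fin m → ℝ} (hφ : admissible h φ) (ρ : ContDiffBump (0 : Euc n)) :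
    ∃ Φ : Euc n → Fin m → ℝ, ContDiff ℝ (⊤:ℕ∞) Φ ∧
      (∀ x i, |Φ x i - φ x i| ≤ h (bas m i) * ρ.rOut) ∧
      (∀ x, inSubdiffH h (jac Φ x)) := by
  classical
  have hφi : ∀ i, Continuous fun y => φ y i := admissible_comp_continuous hh hm hφ
  set Φ : Euc n → Fin m → ℝ := fun x i => mollify ρ (fun y => φ y i) x with hΦdef
  have hΦsmooth : ContDiff ℝ (⊤:ℕ∞) Φ := by
    rw [hΦdef]
    exact contDiff_pi.2 fun i => mollify_contDiff ρ (hφi i)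
  have hΦapprox : ∀ x i, |Φ x i - φ x i| ≤ h (bas m i) * ρ.rOut := by
    intro x i
    exact mollify_dist_le ρ (hh.nonneg _) (hφi i)
      (fun x y => admissible_comp hh hm hφ i x y) x
  refine ⟨Φ, hΦsmooth, hΦapprox, ?_⟩
  -- for each θ in the unit h-ball, the combination is 1-Lipschitz
  have hcombo_eq : ∀ (θ : Fin m → ℝ) (x : Euc n),
      ∑ i, θ i * Φ x i = mollify ρ (fun y => ∑ i, θ i * φ y i) x := by
    intro θ x
    rw [mollify_apply]
    have : ∀ t : Euc n, ρ.normed volume t * ∑ i, θ i * φ (x - t) i =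
        ∑ i, θ i * (ρ.normed volume t * φ (x - t) i) := by
      intro t
      rw [Finset.mul_sum]
      exact Finset.sum_congr rfl fun i _ => by ring
    rw [integral_congr_ae (Filter.Eventually.of_forall this)]
    rw [integral_finset_sum _ fun i _ =>
      ((mollify_integrand_integrable ρ (hφi i) x).const_mul (θ i))]
    refine Finset.sum_congr rfl fun i _ => ?_
    rw [hΦdef]
    simp only
    rw [mollify_apply, integral_const_mul]
  have hcombo_lip : ∀ (θ : Fin m → ℝ), h θ ≤ 1 →
      LipschitzWith 1 (fun x => ∑ i, θ i * Φ x i) := by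
    intro θ hθ
    have hl : ∀ x y, |(∑ i, θ i * φ x i) - ∑ i, θ i * φ y i| ≤ 1 * dist x y := by
      intro x y
      rw [one_mul, ← Finset.sum_sub_distrib]
      have : ∑ i, (θ i * φ x i - θ i * φ y i) = ∑ i, θ i * (φ x i - φ y i) :=
        Finset.sum_congr rfl fun i _ => by ring
      rw [this]
      exact admissible_pair hh hm hφ hθ x y
    have hccont : Continuous fun y => ∑ i, θ i * φ y i :=
      continuous_finset_sum _ fun i _ => (continuous_const.mul (hφi i))
    refine LipschitzWith.of_dist_le_mul fun x y => ?_
    rw [Real.dist_eq, hcombo_eq, hcombo_eq]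
    have h5 := mollify_lipschitz ρ hccont hl x y
    rw [one_mul] at h5
    simpa using h5
  -- the derivative bound
  have hderiv : ∀ (θ : Fin m → ℝ), h θ ≤ 1 → ∀ (x u : Euc n),
      ∑ i, θ i * fderiv ℝ Φ x u i ≤ ‖u‖ := by
    intro θ hθ x u
    set L : (Fin m → ℝ) →L[ℝ] ℝ :=
      ∑ i, θ i • (ContinuousLinearMap.proj i : (Fin m → ℝ) →L[ℝ] ℝ) with hLdef
    have hLapp : ∀ v : Fin m → ℝ, L v = ∑ i, θ i * v i := by
      intro v
      rw [hLdef]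
      rw [ContinuousLinearMap.sum_apply]
      refine Finset.sum_congr rfl fun i _ => ?_
      rw [ContinuousLinearMap.smul_apply, ContinuousLinearMap.proj_apply, smul_eq_mul]
    have hdiff : DifferentiableAt ℝ Φ x :=
      (hΦsmooth.differentiable (by simp)).differentiableAt
    have hfcomp : HasFDerivAt (⇑L ∘ Φ) (L.comp (fderiv ℝ Φ x)) x :=
      (L.hasFDerivAt).comp x hdiff.hasFDerivAt
    have heq : (⇑L ∘ Φ) = fun x => ∑ i, θ i * Φ x i := by
      funext z
      exact hLapp (Φ z)
    have hlip : LipschitzWith 1 (⇑L ∘ Φ) := by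
      rw [heq]; exact hcombo_lip θ hθ
    have hnorm : ‖fderiv ℝ (⇑L ∘ Φ) x‖ ≤ 1 := by
      have := norm_fderiv_le_of_lipschitz ℝ hlip (x₀ := x)
      simpa using this
    have hfd : fderiv ℝ (⇑L ∘ Φ) x = L.comp (fderiv ℝ Φ x) := hfcomp.fderiv
    have happ : L.comp (fderiv ℝ Φ x) u = ∑ i, θ i * fderiv ℝ Φ x u i := by
      rw [ContinuousLinearMap.comp_apply, hLapp]
    calc ∑ i, θ i * fderiv ℝ Φ x u i = fderiv ℝ (⇑L ∘ Φ) x u := by rw [hfd, happ]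
      _ ≤ ‖fderiv ℝ (⇑L ∘ Φ) x u‖ := le_abs_self _
      _ ≤ ‖fderiv ℝ (⇑L ∘ Φ) x‖ * ‖u‖ := (fderiv ℝ (⇑L ∘ Φ) x).le_opNorm u
      _ ≤ 1 * ‖u‖ := mul_le_mul_of_nonneg_right hnorm (norm_nonneg _)
      _ = ‖u‖ := one_mul _
  -- conclude
  intro x u hu
  refine dualNorm_le hh zero_le_one fun θ hθ => ?_
  have hmv : ∀ i, matVec (jac Φ x) u i = fderiv ℝ Φ x u i := fderiv_matVec hΦsmooth x u
  calc ∑ i, matVec (jac Φ x) u i * θ i = ∑ i, θ i * fderiv ℝ Φ x u i := by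
        refine Finset.sum_congr rfl fun i _ => ?_
        rw [hmv i, mul_comm]
    _ ≤ ‖u‖ := hderiv θ hθ x u
    _ ≤ 1 := hu

/-- weak duality: if `∂F = F₀` and `φ` is an admissible dual
potential, then `∫ φ · dF₀ ≤ |F|_H`. -/
theorem statement5 {m n : ℕ} (hm : 0 < m) (hn : 0 < n)
    (h : (Fin m → ℝ) → ℝ) (hh : IsNorm h)
    (F : MatMeas m n) (hF : suppInCpt F)
    (F0 : VecMeas m n) (hF0 : vSuppInCpt F0)
    (hb : isBoundary F F0)
    (φ : Euc n → Fin m → ℝ) (hφ : admissible h φ) :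
    intDual F0 φ ≤ tvH h F := by
  classical
  obtain ⟨K, hKc0, hsF⟩ := hF
  obtain ⟨K₀, hK0c, hsF0⟩ := hF0
  set K₁ := K ∪ K₀ with hK₁def
  have hK₁c : IsCompact K₁ := hKc0.union hK0c
  have hsF1 : suppIn F K₁ := fun B hB hd i j =>
    hsF B hB (hd.mono_right Set.subset_union_left) i j
  have hvF0 : ∀ i, vanishesOutside (F0 i) K₁ := fun i B hB hd =>
    hsF0 B hB (hd.mono_right Set.subset_union_right) i
  have hK₁m : MeasurableSet K₁ := hK₁c.isClosed.measurableSet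
  set Cm : ℝ := ∑ i, h (bas m i) * massR (F0 i) with hCmdef
  have hCm0 : 0 ≤ Cm :=
    Finset.sum_nonneg fun i _ => mul_nonneg (hh.nonneg _) (massR_nonneg _)
  refine le_of_forall_pos_le_add fun η hη => ?_
  set ε := η / (Cm + 1) with hεdef
  have hε0 : 0 < ε := div_pos hη (by linarith)
  -- radius
  obtain ⟨R, hR⟩ := hK₁c.isBounded.subset_closedBall (0 : Euc n)
  have hK₁ball : K₁ ⊆ Metric.ball (0 : Euc n) (|R| + 1) := by
    intro x hx
    have := hR hx
    rw [Metric.mem_closedBall] at this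
    rw [Metric.mem_ball]
    calc dist x 0 ≤ R := this
      _ ≤ |R| := le_abs_self R
      _ < |R| + 1 := by linarith
  -- bump functions
  set ρ : ContDiffBump (0 : Euc n) := ⟨ε/2, ε, by positivity, by linarith⟩ with hρdef
  have hρout : ρ.rOut = ε := rfl
  set χb : ContDiffBump (0 : Euc n) := ⟨|R|+1, |R|+2, by positivity, by linarith⟩ with hχdef
  obtain ⟨Φ, hΦsmooth, hΦapprox, hΦsub⟩ := moll_main hh hm hφ ρ
  set ψ : Euc n → Fin m → ℝ := fun x => χb x • Φ x with hψdef
  have hψsmooth : ContDiff ℝ (⊤:ℕ∞) ψ := χb.contDiff.smul hΦsmooth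
  have hψsupp : HasCompactSupport ψ := χb.hasCompactSupport.smul_right
  have hψeq : ∀ x ∈ Metric.ball (0:Euc n) (|R|+1), ψ x = Φ x := by
    intro x hx
    have hx1 : x ∈ Metric.closedBall (0:Euc n) χb.rIn :=
      Metric.ball_subset_closedBall hx
    rw [hψdef]
    simp only
    rw [χb.one_of_mem_closedBall hx1, one_smul]
  have hjaceq : ∀ x ∈ K₁, jac ψ x = jac Φ x := by
    intro x hx
    have hnb : Metric.ball (0:Euc n) (|R|+1) ∈ nhds x :=
      Metric.isOpen_ball.mem_nhds (hK₁ball hx)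
    have hev : ψ =ᶠ[nhds x] Φ := Filter.eventuallyEq_of_mem hnb hψeq
    funext i j
    simp only [jac]
    rw [hev.fderiv_eq]
  -- step 1: mollification error on the dual objective
  have hψicont : ∀ i, Continuous fun x => ψ x i :=
    fun i => (continuous_apply i).comp hψsmooth.continuous
  have hφicont : ∀ i, Continuous fun x => φ x i := admissible_comp_continuous hh hm hφ
  have hstep1 : ∀ i, sInt (F0 i) (fun x => φ x i) ≤
      sInt (F0 i) (fun x => ψ x i) + ε * (h (bas m i) * massR (F0 i)) := by
    intro i
    obtain ⟨hp0, hn0⟩ := posM_compl hK₁m (hvF0 i)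
    obtain ⟨Cφ, hCφ⟩ := hK₁c.exists_bound_of_continuousOn (hφicont i).continuousOn
    obtain ⟨Cψ, hCψ⟩ := hK₁c.exists_bound_of_continuousOn (hψicont i).continuousOn
    have hintφ1 : Integrable (fun x => φ x i) (posM (F0 i)) :=
      integrable_of_bound_on hp0 (hφicont i).aestronglyMeasurable hCφ
    have hintφ2 : Integrable (fun x => φ x i) (negM (F0 i)) :=
      integrable_of_bound_on hn0 (hφicont i).aestronglyMeasurable hCφ
    have hintψ1 : Integrable (fun x => ψ x i) (posM (F0 i)) :=
      integrable_of_bound_on hp0 (hψicont i).aestronglyMeasurable hCψ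
    have hintψ2 : Integrable (fun x => ψ x i) (negM (F0 i)) :=
      integrable_of_bound_on hn0 (hψicont i).aestronglyMeasurable hCψ
    have hsub := sInt_sub (F0 i) hintφ1 hintφ2 hintψ1 hintψ2
    have hbound : ∀ x ∈ K₁, |φ x i - ψ x i| ≤ h (bas m i) * ε := by
      intro x hx
      rw [hψeq x (hK₁ball hx)]
      have := hΦapprox x i
      rw [hρout] at this
      rw [abs_sub_comm]
      exact this
    have habs : |sInt (F0 i) (fun x => φ x i - ψ x i)| ≤
        (h (bas m i) * ε) * massR (F0 i) :=
      sInt_abs_le hK₁m (hvF0 i) (mul_nonneg (hh.nonneg _) hε0.le) hbound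
    have h1 := (abs_le.1 habs).2
    rw [hsub] at h1
    nlinarith [massR_nonneg (F0 i)]
  -- step 2: boundary identity
  have hbd := hb ψ hψsmooth hψsupp
  -- step 3: core inequality
  have hG : ∀ x ∈ K₁, inSubdiffH h (jac ψ x) := fun x hx => by
    rw [hjaceq x hx]; exact hΦsub x
  have hGc : Continuous fun x => jac ψ x := by
    have hfc : Continuous fun x => fderiv ℝ ψ x :=
      hψsmooth.continuous_fderiv (by simp)
    refine continuous_pi fun i => continuous_pi fun j => ?_
    exact (continuous_apply i).comp
      ((ContinuousLinearMap.apply ℝ (Fin m → ℝ) (EuclideanSpace.single j (1:ℝ))).continuous.comp hfc)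
  have hcore := sInt_sum_le_tvH hh hm F hK₁c hsF1 (fun x => jac ψ x) hGc hG
  -- combine
  have hεCm : ε * Cm ≤ η := by
    rw [hεdef, div_mul_eq_mul_div, div_le_iff₀ (by linarith : (0:ℝ) < Cm + 1)]
    nlinarith
  calc intDual F0 φ = ∑ i, sInt (F0 i) (fun x => φ x i) := rfl
    _ ≤ ∑ i, (sInt (F0 i) (fun x => ψ x i) + ε * (h (bas m i) * massR (F0 i))) :=
        Finset.sum_le_sum fun i _ => hstep1 i
    _ = (∑ i, sInt (F0 i) fun x => ψ x i) + ε * Cm := by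
        rw [Finset.sum_add_distrib, hCmdef, Finset.mul_sum]
    _ = (∑ i, ∑ j, sInt (F i j) fun x => jac ψ x i j) + ε * Cm := by rw [hbd]
    _ ≤ tvH h F + ε * Cm := by linarith [hcore]
    _ ≤ tvH h F + η := by linarith
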